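/- If W ≠ 0 is symmetric nonnegative and D the GeneRank diagonal matrix, then for 0 < α < 1 the smallest eigenvalue of T_α = (I + αD^{-1/2}WD^{-1/2})(I - αD^{-1/2}WD^{-1/2}) equals 1 - α². -/

import Mathlib

open scoped Matrix

theorem stmt_11 (n : ℕ) (W : Matrix (Fin n) (Fin n) ℝ) (hW : W.IsSymm)
    (hWnn : ∀ i j, 0 ≤ W i j) (hWne : W ≠ 0)
    (α : ℝ) (hα0 : 0 < α) (hα1 : α < 1)
    (d : Fin n → ℝ) (hd : ∀ i, d i = if 0 < ∑ j, W i j then ∑ j, W i j else 1)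
    (Dhalf : Matrix (Fin n) (Fin n) ℝ)
    (hDhalf : Dhalf = Matrix.diagonal fun i => (Real.sqrt (d i))⁻¹)
    (J : Matrix (Fin n) (Fin n) ℝ) (hJ : J = α • (Dhalf * W * Dhalf)) :
    (1 - α ^ 2) ∈ spectrum ℝ ((1 + J) * (1 - J)) ∧
    ∀ μ ∈ spectrum ℝ ((1 + J) * (1 - J)), 1 - α ^ 2 ≤ μ := by
  have hdpos : ∀ i, 0 < d i := by
    intro i; rw [hd i]; split
    · assumption
    · norm_num
  have hsq : ∀ i, Real.sqrt (d i) ≠ 0 := fun i => ne_of_gt (Real.sqrt_pos.2 (hdpos i))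
  have hrow0 : ∀ i, ¬ (0 < ∑ j, W i j) → ∀ j, W i j = 0 := by
    intro i hi j
    have hsum : ∑ j, W i j = 0 :=
      le_antisymm (not_lt.1 hi) (Finset.sum_nonneg fun j _ => hWnn i j)
    exact (Finset.sum_eq_zero_iff_of_nonneg (fun j _ => hWnn i j)).1 hsum j (Finset.mem_univ j)
  have hWsym : ∀ i j, W i j = W j i := by
    intro i j
    have := congrFun (congrFun hW j) i
    simpa [Matrix.transpose_apply] using this
  have hMeq : (1 + J) * (1 - J) = 1 - J * J := by noncomm_ring
  -- the eigenvector for eigenvalue 1 - α²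
  set v : Fin n → ℝ := fun i => if 0 < ∑ j, W i j then Real.sqrt (d i) else 0 with hv
  have hvne : v ≠ 0 := by
    obtain ⟨i, j, hij⟩ : ∃ i j, W i j ≠ 0 := by
      by_contra h
      push_neg at h
      exact hWne (by ext i j; simp [h i j])
    have hpos : 0 < ∑ k, W i k :=
      Finset.sum_pos' (fun k _ => hWnn i k)
        ⟨j, Finset.mem_univ j, lt_of_le_of_ne (hWnn i j) (Ne.symm hij)⟩
    intro h
    have : v i = 0 := congrFun h i
    rw [hv] at this
    simp only [hpos, if_pos] at this
    exact hsq i this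
  have hSv : (Dhalf * W * Dhalf) *ᵥ v = v := by
    have h1 : Dhalf *ᵥ v = fun j => if 0 < ∑ k, W j k then 1 else 0 := by
      funext j
      rw [hDhalf, Matrix.mulVec_diagonal]
      by_cases h : 0 < ∑ k, W j k
      · simp [hv, h, inv_mul_cancel₀ (hsq j)]
      · simp [hv, h]
    have h2 : W *ᵥ (Dhalf *ᵥ v) = fun i => ∑ k, W i k := by
      rw [h1]
      funext i
      simp only [Matrix.mulVec, dotProduct]
      refine Finset.sum_congr rfl fun k _ => ?_
      by_cases h : 0 < ∑ l, W k l
      · simp [h]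
      · have : W i k = 0 := by rw [hWsym i k]; exact hrow0 k h i
        simp [h, this]
    calc (Dhalf * W * Dhalf) *ᵥ v = Dhalf *ᵥ (W *ᵥ (Dhalf *ᵥ v)) := by
          rw [Matrix.mulVec_mulVec, Matrix.mulVec_mulVec, Matrix.mul_assoc]
      _ = v := by
          rw [h2]
          funext i
          rw [hDhalf, Matrix.mulVec_diagonal]
          by_cases h : 0 < ∑ k, W i k
          · have hdi : d i = ∑ k, W i k := by rw [hd i, if_pos h]
            rw [hv]
            simp only [h, if_pos]
            rw [← hdi, ← Real.mul_self_sqrt (hdpos i).le]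
            rw [Real.sqrt_mul_self (Real.sqrt_nonneg _), ← mul_assoc, inv_mul_cancel₀ (hsq i), one_mul]
          · have : ∑ k, W i k = 0 :=
              le_antisymm (not_lt.1 h) (Finset.sum_nonneg fun k _ => hWnn i k)
            simp [hv, h, this]
  have hJv : J *ᵥ v = α • v := by
    rw [hJ, Matrix.smul_mulVec, hSv]
  have hJJv : (J * J) *ᵥ v = (α * α) • v := by
    rw [← Matrix.mulVec_mulVec, hJv, Matrix.mulVec_smul, hJv, smul_smul]
  constructor
  · rw [hMeq, spectrum.mem_iff]
    intro hunit
    have hdet : (algebraMap ℝ (Matrix (Fin n) (Fin n) ℝ) (1 - α ^ 2) - (1 - J * J)).det = 0 := by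
      apply (Matrix.exists_mulVec_eq_zero_iff).1
      refine ⟨v, hvne, ?_⟩
      rw [Matrix.sub_mulVec, Matrix.sub_mulVec, Matrix.one_mulVec, hJJv,
        Algebra.algebraMap_eq_smul_one, Matrix.smul_mulVec, Matrix.one_mulVec]
      funext i
      simp only [Pi.sub_apply, Pi.smul_apply, smul_eq_mul, Pi.zero_apply]
      ring
    rw [Matrix.isUnit_iff_isUnit_det, hdet] at hunit
    exact (by simp : ¬ IsUnit (0 : ℝ)) hunit
  · intro μ hμ
    rw [hMeq, spectrum.mem_iff] at hμ
    have hdet : (algebraMap ℝ (Matrix (Fin n) (Fin n) ℝ) μ - (1 - J * J)).det = 0 := by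
      by_contra h
      exact hμ ((Matrix.isUnit_iff_isUnit_det _).2 (Ne.isUnit h))
    obtain ⟨x, hxne, hx0⟩ := (Matrix.exists_mulVec_eq_zero_iff).2 hdet
    set β := 1 - μ with hβ
    have hx2 : (J * J) *ᵥ x = β • x := by
      rw [Matrix.sub_mulVec, Matrix.sub_mulVec, Matrix.one_mulVec,
        Algebra.algebraMap_eq_smul_one, Matrix.smul_mulVec, Matrix.one_mulVec] at hx0
      funext i
      have := congrFun hx0 i
      simp only [Pi.sub_apply, Pi.smul_apply, smul_eq_mul, Pi.zero_apply] at this ⊢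
      rw [hβ]; ring_nf; linarith
    -- similarity to α² (D⁻¹ W)²
    set K : Matrix (Fin n) (Fin n) ℝ := α • (Matrix.diagonal (fun i => (d i)⁻¹) * W) with hK
    have hss : Dhalf * Dhalf = Matrix.diagonal fun i => (d i)⁻¹ := by
      rw [hDhalf, Matrix.diagonal_mul_diagonal]
      have : (fun i => (Real.sqrt (d i))⁻¹ * (Real.sqrt (d i))⁻¹) = fun i => (d i)⁻¹ := by
        funext i
        rw [← mul_inv, Real.mul_self_sqrt (hdpos i).le]
      rw [this]
    have hDK : Dhalf * (J * J) = (K * K) * Dhalf := by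
      rw [hJ, hK, ← hss]
      simp only [Matrix.smul_mul, Matrix.mul_smul, smul_smul]
      congr 1
      simp only [Matrix.mul_assoc]
    set z : Fin n → ℝ := Dhalf *ᵥ x with hz
    have hzB : (K * K) *ᵥ z = β • z := by
      have : Dhalf *ᵥ ((J * J) *ᵥ x) = (K * K) *ᵥ z := by
        rw [hz, Matrix.mulVec_mulVec, Matrix.mulVec_mulVec, hDK]
      rw [hx2, Matrix.mulVec_smul] at this
      exact this.symm
    have hzne : z ≠ 0 := by
      obtain ⟨i, hi⟩ : ∃ i, x i ≠ 0 := by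
        by_contra h; push_neg at h; exact hxne (funext h)
      intro h
      have : z i = 0 := congrFun h i
      rw [hz, hDhalf, Matrix.mulVec_diagonal] at this
      exact hi ((mul_eq_zero.1 this).resolve_left (inv_ne_zero (hsq i)))
    -- entrywise bounds on K
    have hKapp : ∀ i j, K i j = α * ((d i)⁻¹ * W i j) := by
      intro i j
      rw [hK]
      simp [Matrix.diagonal_mul]
    have hKnn : ∀ i j, 0 ≤ K i j := by
      intro i j
      rw [hKapp]
      exact mul_nonneg hα0.le (mul_nonneg (inv_nonneg.2 (hdpos i).le) (hWnn i j))
    have hKrow : ∀ i, ∑ j, K i j ≤ α := by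
      intro i
      simp only [hKapp]
      rw [← Finset.mul_sum, ← Finset.mul_sum]
      by_cases h : 0 < ∑ j, W i j
      · have hdi : d i = ∑ j, W i j := by rw [hd i, if_pos h]
        rw [← hdi, inv_mul_cancel₀ (ne_of_gt (hdpos i)), mul_one]
      · have : ∑ j, W i j = 0 :=
          le_antisymm (not_lt.1 h) (Finset.sum_nonneg fun j _ => hWnn i j)
        rw [this]; simpa using hα0.le
    have hBnn : ∀ i j, 0 ≤ (K * K) i j := by
      intro i j
      rw [Matrix.mul_apply]
      exact Finset.sum_nonneg fun k _ => mul_nonneg (hKnn i k) (hKnn k j)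
    have hBrow : ∀ i, ∑ j, (K * K) i j ≤ α * α := by
      intro i
      simp only [Matrix.mul_apply]
      rw [Finset.sum_comm]
      calc ∑ k, ∑ j, K i k * K k j = ∑ k, K i k * ∑ j, K k j := by
            simp [Finset.mul_sum]
        _ ≤ ∑ k, K i k * α :=
            Finset.sum_le_sum fun k _ => mul_le_mul_of_nonneg_left (hKrow k) (hKnn i k)
        _ = (∑ k, K i k) * α := by rw [Finset.sum_mul]
        _ ≤ α * α := mul_le_mul_of_nonneg_right (hKrow i) hα0.le
    -- ∞-norm eigenvalue bound
    obtain ⟨i₁, hi₁⟩ : ∃ i, z i ≠ 0 := by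
      by_contra h; push_neg at h; exact hzne (funext h)
    obtain ⟨i₀, _, hmax⟩ := Finset.exists_max_image Finset.univ (fun i => |z i|)
      ⟨i₁, Finset.mem_univ i₁⟩
    have hzi₀ : 0 < |z i₀| := lt_of_lt_of_le (abs_pos.2 hi₁) (hmax i₁ (Finset.mem_univ i₁))
    have hkey : |β| * |z i₀| ≤ (α * α) * |z i₀| := by
      have h1 : β * z i₀ = ∑ j, (K * K) i₀ j * z j := by
        have := congrFun hzB i₀
        simp only [Matrix.mulVec, dotProduct, Pi.smul_apply, smul_eq_mul] at this
        exact this.symm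
      calc |β| * |z i₀| = |β * z i₀| := (abs_mul β (z i₀)).symm
        _ = |∑ j, (K * K) i₀ j * z j| := by rw [h1]
        _ ≤ ∑ j, |(K * K) i₀ j * z j| := Finset.abs_sum_le_sum_abs _ _
        _ = ∑ j, (K * K) i₀ j * |z j| := by
            refine Finset.sum_congr rfl fun j _ => ?_
            rw [abs_mul, abs_of_nonneg (hBnn i₀ j)]
        _ ≤ ∑ j, (K * K) i₀ j * |z i₀| :=
            Finset.sum_le_sum fun j _ =>
              mul_le_mul_of_nonneg_left (hmax j (Finset.mem_univ j)) (hBnn i₀ j)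
        _ = (∑ j, (K * K) i₀ j) * |z i₀| := by rw [Finset.sum_mul]
        _ ≤ (α * α) * |z i₀| := mul_le_mul_of_nonneg_right (hBrow i₀) hzi₀.le
    have hβle : β ≤ α ^ 2 := by
      have : |β| ≤ α * α := le_of_mul_le_mul_right hkey hzi₀
      calc β ≤ |β| := le_abs_self β
        _ ≤ α * α := this
        _ = α ^ 2 := (sq α).symm
    rw [hβ] at hβle
    linarith
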